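/- Let f, g : ℝ → ℝ be twice differentiable with f''(t) = -f(t) and g''(t) = -g(t) for all t. Then the function I₁,₂(t) = 2·(f'(t)·g'(t) - f(t)·g(t))·sin(2t) - 2·(f(t)·g'(t) + f'(t)·g(t))·cos(2t) is constant, i.e., I₁,₂(t) = I₁,₂(0) for all t ∈ ℝ. -/

import Mathlib

theorem uncoupled_oscillators_first_integral_6 (f f' g g' : ℝ → ℝ)
    (hf : ∀ t, HasDerivAt f (f' t) t)
    (hf' : ∀ t, HasDerivAt f' (-(f t)) t)
    (hg : ∀ t, HasDerivAt g (g' t) t)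
    (hg' : ∀ t, HasDerivAt g' (-(g t)) t) :
    ∀ t : ℝ, 2 * (f' t * g' t - f t * g t) * Real.sin (2*t) - 2 * (f t * g' t + f' t * g t) * Real.cos (2*t) = 2 * (f' 0 * g' 0 - f 0 * g 0) * Real.sin (2*0) - 2 * (f 0 * g' 0 + f' 0 * g 0) * Real.cos (2*0) := by
  have key : ∀ t : ℝ, HasDerivAt (fun t => 2 * (f' t * g' t - f t * g t) * Real.sin (2*t) - 2 * (f t * g' t + f' t * g t) * Real.cos (2*t)) 0 t := by
    intro t
    have hs : HasDerivAt (fun t : ℝ => Real.sin (2*t)) (2 * Real.cos (2*t)) t := by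
      have := (Real.hasDerivAt_sin (2*t)).comp t ((hasDerivAt_id t).const_mul 2)
      simpa [Function.comp_def, mul_comm] using this
    have hc : HasDerivAt (fun t : ℝ => Real.cos (2*t)) (-(2 * Real.sin (2*t))) t := by
      have := (Real.hasDerivAt_cos (2*t)).comp t ((hasDerivAt_id t).const_mul 2)
      simpa [Function.comp_def, mul_comm] using this
    have h := ((((((hf' t).mul (hg' t)).sub ((hf t).mul (hg t))).const_mul 2).mul hs).sub (((((hf t).mul (hg' t)).add ((hf' t).mul (hg t))).const_mul 2).mul hc))
    refine h.congr_deriv ?_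
    simp only [Pi.mul_apply, Pi.sub_apply, Pi.add_apply]
    ring
  intro t
  have := is_const_of_deriv_eq_zero (f := fun t => 2 * (f' t * g' t - f t * g t) * Real.sin (2*t) - 2 * (f t * g' t + f' t * g t) * Real.cos (2*t)) (fun x => (key x).differentiableAt) (fun x => (key x).deriv) t 0
  simpa using this
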